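/- Let g : ℝᵖ → ℝ be convex and ℓ_g-Lipschitz, A : ℝⁿ → ℝᵖ be C¹ with L_A-Lipschitz Jacobian, x, d ∈ ℝⁿ, v ∈ ℝᵖ, and η ∈ [0,1]. Then g(A(x + ηd)) ≤ (1 − η) g(A(x)) + η g(A(x) + v) + η ℓ_g ‖∇A(x)d − v‖ + (ℓ_g L_A/2) η² ‖d‖². -/

import Mathlib

open scoped NNReal

/-- Second-order Taylor bound for a function with Lipschitz derivative. -/
lemma taylor_bound {E F : Type*} [NormedAddCommGroup E] [NormedSpace ℝ E]
    [NormedAddCommGroup F] [NormedSpace ℝ F]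
    (A : E → F) (DA : E → (E →L[ℝ] F)) (LA : ℝ≥0)
    (hdiff : ∀ x, HasFDerivAt A (DA x) x) (hDAlip : LipschitzWith LA DA)
    (x u : E) : ‖A (x + u) - A x - DA x u‖ ≤ (LA : ℝ) / 2 * ‖u‖ ^ 2 := by
  set f : ℝ → F := fun t => A (x + t • u) - t • DA x u - A x with hf
  have hderiv : ∀ t : ℝ, HasDerivAt f (DA (x + t • u) u - DA x u) t := by
    intro t
    have h1 : HasDerivAt (fun t : ℝ => x + t • u) u t := by
      simpa using ((hasDerivAt_id t).smul_const u).const_add x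
    have h2 : HasDerivAt (fun t : ℝ => A (x + t • u)) (DA (x + t • u) u) t := by
      exact (hdiff (x + t • u)).comp_hasDerivAt t h1
    have h3 : HasDerivAt (fun t : ℝ => t • DA x u) (DA x u) t := by
      simpa using (hasDerivAt_id t).smul_const (DA x u)
    exact (h2.sub h3).sub_const (A x)
  have key : ∀ t ∈ Set.Icc (0:ℝ) 1, ‖f t‖ ≤ (LA : ℝ) * ‖u‖ ^ 2 * t ^ 2 / 2 := by
    intro t ht
    have hB : ∀ s : ℝ, HasDerivAt (fun t : ℝ => (LA : ℝ) * ‖u‖ ^ 2 * t ^ 2 / 2)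
        ((LA : ℝ) * ‖u‖ ^ 2 * s) s := by
      intro s
      have := ((hasDerivAt_pow 2 s).const_mul ((LA : ℝ) * ‖u‖ ^ 2)).div_const 2
      refine this.congr_deriv ?_
      ring
    have hbound : ∀ s ∈ Set.Ico (0:ℝ) 1,
        ‖DA (x + s • u) u - DA x u‖ ≤ (LA : ℝ) * ‖u‖ ^ 2 * s := by
      intro s hs
      have h1 : ‖DA (x + s • u) u - DA x u‖ ≤ ‖DA (x + s • u) - DA x‖ * ‖u‖ := by
        simpa using (DA (x + s • u) - DA x).le_opNorm u
      have h2 : ‖DA (x + s • u) - DA x‖ ≤ (LA : ℝ) * (s * ‖u‖) := by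
        have := hDAlip.dist_le_mul (x + s • u) x
        simpa [dist_eq_norm, norm_smul, abs_of_nonneg hs.1] using this
      calc ‖DA (x + s • u) u - DA x u‖ ≤ ((LA : ℝ) * (s * ‖u‖)) * ‖u‖ :=
            h1.trans (mul_le_mul_of_nonneg_right h2 (norm_nonneg u))
        _ = (LA : ℝ) * ‖u‖ ^ 2 * s := by ring
    exact image_norm_le_of_norm_deriv_right_le_deriv_boundary
      (fun s _ => (hderiv s).continuousAt.continuousWithinAt)
      (fun s _ => (hderiv s).hasDerivWithinAt)
      (by simp [hf]) hB hbound ht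
  have h1 := key 1 (by norm_num)
  have : f 1 = A (x + u) - A x - DA x u := by simp [hf]; abel
  rw [this] at h1
  calc ‖A (x + u) - A x - DA x u‖ ≤ (LA : ℝ) * ‖u‖ ^ 2 * 1 ^ 2 / 2 := h1
    _ = (LA : ℝ) / 2 * ‖u‖ ^ 2 := by ring

/-- If `g : ℝᵖ → ℝ` is convex and `ℓ_g`-Lipschitz and `A : ℝⁿ → ℝᵖ` is differentiable
with `L_A`-Lipschitz Jacobian, then for all `x, d, v` and `η ∈ [0,1]`,
`g(A(x + ηd)) ≤ (1 − η)g(A(x)) + ηg(A(x) + v) + ηℓ_g‖∇A(x)d − v‖ + (ℓ_g L_A/2)η²‖d‖²`. -/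
theorem stmt10 {n p : ℕ}
    (g : EuclideanSpace ℝ (Fin p) → ℝ)
    (A : EuclideanSpace ℝ (Fin n) → EuclideanSpace ℝ (Fin p))
    (DA : EuclideanSpace ℝ (Fin n) →
      (EuclideanSpace ℝ (Fin n) →L[ℝ] EuclideanSpace ℝ (Fin p)))
    (ℓg LA : ℝ≥0)
    (hgconv : ConvexOn ℝ Set.univ g)
    (hglip : LipschitzWith ℓg g)
    (hdiff : ∀ x, HasFDerivAt A (DA x) x)
    (hDAlip : LipschitzWith LA DA)
    (x d : EuclideanSpace ℝ (Fin n)) (v : EuclideanSpace ℝ (Fin p))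
    (η : ℝ) (hη₀ : 0 ≤ η) (hη₁ : η ≤ 1) :
    g (A (x + η • d)) ≤
      (1 - η) * g (A x) + η * g (A x + v) + η * (ℓg : ℝ) * ‖DA x d - v‖ +
        ((ℓg : ℝ) * (LA : ℝ) / 2) * η ^ 2 * ‖d‖ ^ 2 := by
  set w : EuclideanSpace ℝ (Fin p) := A x + η • v with hw
  -- Lipschitz step
  have hlip : g (A (x + η • d)) ≤ g w + (ℓg : ℝ) * ‖A (x + η • d) - w‖ := by
    have := hglip.dist_le_mul (A (x + η • d)) w
    have habs : |g (A (x + η • d)) - g w| ≤ (ℓg : ℝ) * ‖A (x + η • d) - w‖ := by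
      simpa [Real.dist_eq, dist_eq_norm] using this
    linarith [abs_le.mp habs |>.2, le_abs_self (g (A (x + η • d)) - g w)]
  -- convexity step
  have hconv : g w ≤ (1 - η) * g (A x) + η * g (A x + v) := by
    have := hgconv.2 (Set.mem_univ (A x)) (Set.mem_univ (A x + v))
      (by linarith : (0:ℝ) ≤ 1 - η) hη₀ (by ring)
    have hwconv : (1 - η) • A x + η • (A x + v) = w := by
      rw [hw]; module
    rwa [hwconv] at this
  -- norm bound
  have htay := taylor_bound A DA LA hdiff hDAlip x (η • d)
  have hnorm : ‖A (x + η • d) - w‖ ≤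
      (LA : ℝ) / 2 * η ^ 2 * ‖d‖ ^ 2 + η * ‖DA x d - v‖ := by
    have heq : A (x + η • d) - w =
        (A (x + η • d) - A x - DA x (η • d)) + η • (DA x d - v) := by
      rw [hw]
      rw [map_smul]
      module
    calc ‖A (x + η • d) - w‖
        ≤ ‖A (x + η • d) - A x - DA x (η • d)‖ + ‖η • (DA x d - v)‖ := by
          rw [heq]; exact norm_add_le _ _
      _ ≤ (LA : ℝ) / 2 * ‖η • d‖ ^ 2 + η * ‖DA x d - v‖ := by
          gcongr
          rw [norm_smul, Real.norm_eq_abs, abs_of_nonneg hη₀]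
      _ = (LA : ℝ) / 2 * η ^ 2 * ‖d‖ ^ 2 + η * ‖DA x d - v‖ := by
          rw [norm_smul, Real.norm_eq_abs, abs_of_nonneg hη₀]; ring
  have hℓ : (0:ℝ) ≤ (ℓg : ℝ) := ℓg.coe_nonneg
  calc g (A (x + η • d)) ≤ g w + (ℓg : ℝ) * ‖A (x + η • d) - w‖ := hlip
    _ ≤ (1 - η) * g (A x) + η * g (A x + v) +
        (ℓg : ℝ) * ((LA : ℝ) / 2 * η ^ 2 * ‖d‖ ^ 2 + η * ‖DA x d - v‖) := by
        gcongr
    _ = (1 - η) * g (A x) + η * g (A x + v) + η * (ℓg : ℝ) * ‖DA x d - v‖ +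
        ((ℓg : ℝ) * (LA : ℝ) / 2) * η ^ 2 * ‖d‖ ^ 2 := by ring
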